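/- Equivariant Newton–Hensel lemma: let k be a field of characteristic zero containing all l-th roots of unity, let μ_l act on k[[t]][x_1,...,x_d] by ζ·t = ζt, ζ·x_i = ζ^{a_i}x_i (0 ≤ a_i ≤ l-1), and on k[[t]] by ζ·t = ζt. Let Λ be the set of μ_l-equivariant k[[t]]-algebra homomorphisms k[[t]][x_1,...,x_d] → k[[t]]. Let f_1,...,f_r (r ≤ d) be μ_l-invariant, J = det(∂f_i/∂x_j)_{1≤i,j≤r}, and let e > 0 with e' := e + Σ_{j=1}^r a_j divisible by l. If η ∈ Λ satisfies η(J) ≢ 0 mod t^{e+1} and η(f_i) ≡ 0 mod t^{2e'+l} for all i, then there exists θ ∈ Λ with θ(f_i) = 0 for all i and θ(x_i) ≡ η(x_i) mod t^{e+l} for all i. -/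

import Mathlib

open MvPolynomial

/-- The action of an `l`-th root of unity `ζ` on `k[[t]][x_1,...,x_d]`:
`t ↦ ζ t` and `x_i ↦ ζ^{a_i} x_i`. -/
noncomputable def muActionHom (k : Type*) [CommRing k] {d : ℕ} (a : Fin d → ℕ) (ζ : k) :
    MvPolynomial (Fin d) (PowerSeries k) →+* MvPolynomial (Fin d) (PowerSeries k) :=
  eval₂Hom ((C : PowerSeries k →+* MvPolynomial (Fin d) (PowerSeries k)).comp
      (PowerSeries.rescale ζ))
    (fun i => C ((PowerSeries.C ζ) ^ a i) * X i)

/-- `μ_l`-equivariance of a `k[[t]]`-algebra homomorphism `k[[t]][x_1,...,x_d] → k[[t]]`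
(the `ζ`-action on `k[[t]]` being `t ↦ ζt`). -/
def IsEquivariantHom {k : Type*} [CommRing k] {d : ℕ} (a : Fin d → ℕ) (ζ : k)
    (γ : MvPolynomial (Fin d) (PowerSeries k) →ₐ[PowerSeries k] PowerSeries k) : Prop :=
  ∀ p, γ (muActionHom k a ζ p) = PowerSeries.rescale ζ (γ p)


namespace NHAux
open PowerSeries



variable {k : Type*} [Field k] {l : ℕ}

/-- weight space: coefficients supported on `n ≡ α (mod l)` -/
def wt (l : ℕ) {k : Type*} [Field k] (α : ZMod l) (φ : PowerSeries k) : Prop :=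
  ∀ n : ℕ, (n : ZMod l) ≠ α → PowerSeries.coeff n φ = 0

lemma wt_zero (α : ZMod l) : wt l α (0 : PowerSeries k) := fun n _ => by simp

lemma wt_one : wt l (0 : ZMod l) (1 : PowerSeries k) := by
  intro n hn
  rw [PowerSeries.coeff_one]
  refine if_neg ?_
  rintro rfl; simp at hn

lemma wt_add {α : ZMod l} {φ ψ : PowerSeries k} (h1 : wt l α φ) (h2 : wt l α ψ) :
    wt l α (φ + ψ) := fun n hn => by
  rw [map_add, h1 n hn, h2 n hn, add_zero]

lemma wt_neg {α : ZMod l} {φ : PowerSeries k} (h1 : wt l α φ) : wt l α (-φ) := fun n hn => by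
  rw [map_neg, h1 n hn, neg_zero]

lemma wt_sub {α : ZMod l} {φ ψ : PowerSeries k} (h1 : wt l α φ) (h2 : wt l α ψ) :
    wt l α (φ - ψ) := by
  rw [sub_eq_add_neg]; exact wt_add h1 (wt_neg h2)

lemma wt_mul {α β : ZMod l} {φ ψ : PowerSeries k} (h1 : wt l α φ) (h2 : wt l β ψ) :
    wt l (α + β) (φ * ψ) := by
  intro n hn
  rw [PowerSeries.coeff_mul]
  refine Finset.sum_eq_zero ?_
  rintro ⟨i, j⟩ hij
  rw [Finset.HasAntidiagonal.mem_antidiagonal] at hij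
  by_cases hi : (i : ZMod l) = α
  · have hj : (j : ZMod l) ≠ β := by
      intro hj
      apply hn
      rw [← hij, Nat.cast_add, hi, hj]
    rw [h2 j hj, mul_zero]
  · rw [h1 i hi, zero_mul]

lemma wt_zsmul {α : ZMod l} {φ : PowerSeries k} (m : ℤ) (h1 : wt l α φ) :
    wt l α (m • φ) := fun n hn => by
  rw [map_zsmul, h1 n hn, smul_zero]

lemma wt_sum {ι : Type*} {s : Finset ι} {α : ZMod l} {g : ι → PowerSeries k}
    (h : ∀ i ∈ s, wt l α (g i)) : wt l α (∑ i ∈ s, g i) := fun n hn => by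
  rw [map_sum]
  exact Finset.sum_eq_zero fun i hi => h i hi n hn

lemma wt_prod {ι : Type*} {s : Finset ι} {β : ι → ZMod l} {g : ι → PowerSeries k}
    (h : ∀ i ∈ s, wt l (β i) (g i)) : wt l (∑ i ∈ s, β i) (∏ i ∈ s, g i) := by
  classical
  induction s using Finset.induction_on with
  | empty => simpa using wt_one
  | @insert x s hnotmem ih =>
    rw [Finset.sum_insert hnotmem, Finset.prod_insert hnotmem]
    exact wt_mul (h x (Finset.mem_insert_self x s))
      (ih fun i hi => h i (Finset.mem_insert_of_mem hi))

lemma wt_det {r : ℕ} {β γ : Fin r → ZMod l} {N : Matrix (Fin r) (Fin r) (PowerSeries k)}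
    (h : ∀ p q, wt l (β p + γ q) (N p q)) :
    wt l ((∑ p, β p) + ∑ q, γ q) N.det := by
  rw [Matrix.det_apply]
  refine wt_sum fun σ _ => wt_zsmul _ ?_
  have : (∑ p, β p) + ∑ q, γ q = ∑ q, (β (σ q) + γ q) := by
    rw [Finset.sum_add_distrib, Equiv.sum_comp σ β]
  rw [this]
  exact wt_prod fun q _ => h (σ q) q

/-- cancellation of a nonzero factor against weight spaces -/
lemma wt_of_mul_cancel {γ δ : ZMod l} {c z : PowerSeries k} (hc : c ≠ 0)
    (hcw : wt l γ c) (h : wt l δ (c * z)) : wt l (δ - γ) z := by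
  intro n hn
  by_contra h0
  set ε : ZMod l := (n : ZMod l) with hε
  have hπ : c * (PowerSeries.mk fun j => if (j : ZMod l) = ε then PowerSeries.coeff j z else 0)
      = 0 := by
    ext m
    rw [PowerSeries.coeff_mul, map_zero]
    by_cases hm : (m : ZMod l) = γ + ε
    · have : ∑ p ∈ Finset.HasAntidiagonal.antidiagonal m,
          PowerSeries.coeff p.1 c *
            PowerSeries.coeff p.2 (PowerSeries.mk fun j =>
              if (j : ZMod l) = ε then PowerSeries.coeff j z else 0)
          = ∑ p ∈ Finset.HasAntidiagonal.antidiagonal m,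
            PowerSeries.coeff p.1 c * PowerSeries.coeff p.2 z := by
        refine Finset.sum_congr rfl ?_
        rintro ⟨i, j⟩ hij
        rw [Finset.HasAntidiagonal.mem_antidiagonal] at hij
        simp only [PowerSeries.coeff_mk]
        by_cases hj : (j : ZMod l) = ε
        · rw [if_pos hj]
        · have hi : (i : ZMod l) ≠ γ := by
            intro hi
            apply hj
            have : (i : ZMod l) + (j : ZMod l) = γ + ε := by
              rw [← Nat.cast_add, hij, hm]
            rw [hi] at this
            exact add_left_cancel this
          rw [if_neg hj, mul_zero, hcw i hi, zero_mul]
      rw [this, ← PowerSeries.coeff_mul]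
      refine h m ?_
      rw [hm]
      intro hδ
      apply hn
      rw [← hδ]
      ring
    · refine Finset.sum_eq_zero ?_
      rintro ⟨i, j⟩ hij
      rw [Finset.HasAntidiagonal.mem_antidiagonal] at hij
      simp only [PowerSeries.coeff_mk]
      by_cases hj : (j : ZMod l) = ε
      · have hi : (i : ZMod l) ≠ γ := by
          intro hi
          apply hm
          rw [← hij, Nat.cast_add, hi, hj]
        rw [hcw i hi, zero_mul]
      · rw [if_neg hj, mul_zero]
  rcases mul_eq_zero.mp hπ with h' | h'
  · exact hc h'
  · apply h0
    have := congrArg (PowerSeries.coeff n) h'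
    rwa [PowerSeries.coeff_mk, if_pos rfl, map_zero] at this



variable {k : Type*} [Field k] {l : ℕ} {ζ : k}

lemma pow_mod (hζ : IsPrimitiveRoot ζ l) (n : ℕ) : ζ ^ n = ζ ^ (n % l) := by
  conv_lhs => rw [← Nat.div_add_mod n l]
  rw [pow_add, pow_mul, hζ.pow_eq_one, one_pow, one_mul]

lemma pow_eq_pow_of_cast_eq (hζ : IsPrimitiveRoot ζ l) {m n : ℕ}
    (h : (m : ZMod l) = (n : ZMod l)) : ζ ^ m = ζ ^ n := by
  rw [pow_mod hζ m, pow_mod hζ n, (ZMod.natCast_eq_natCast_iff m n l).mp h]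

lemma cast_eq_of_pow_eq_pow (hl : 0 < l) (hζ : IsPrimitiveRoot ζ l) {m n : ℕ}
    (h : ζ ^ m = ζ ^ n) : (m : ZMod l) = (n : ZMod l) := by
  rw [pow_mod hζ m, pow_mod hζ n] at h
  rw [ZMod.natCast_eq_natCast_iff]
  exact Nat.ModEq.symm (Nat.mod_modEq m l) |>.trans
    (Nat.ModEq.trans (by rw [hζ.pow_inj (Nat.mod_lt m hl) (Nat.mod_lt n hl) h])
      (Nat.mod_modEq n l))

/-- equivariance with positive weight `m` in terms of `wt` -/
lemma rescale_eq_iff_wt (hl : 0 < l) (hζ : IsPrimitiveRoot ζ l) (m : ℕ) (φ : PowerSeries k) :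
    rescale ζ φ = (PowerSeries.C ζ) ^ m * φ ↔ wt l (m : ZMod l) φ := by
  rw [← map_pow]
  constructor
  · intro h n hn
    have := congrArg (PowerSeries.coeff n) h
    rw [coeff_rescale, PowerSeries.coeff_C_mul] at this
    by_contra h0
    exact hn (cast_eq_of_pow_eq_pow hl hζ (mul_right_cancel₀ h0 this))
  · intro h
    ext n
    rw [coeff_rescale, PowerSeries.coeff_C_mul]
    by_cases hn : (n : ZMod l) = (m : ZMod l)
    · rw [pow_eq_pow_of_cast_eq hζ hn]
    · rw [h n hn, mul_zero, mul_zero]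

/-- negative weight from the twisted relation -/
lemma wt_of_C_pow_mul_rescale (hζ : IsPrimitiveRoot ζ l) (m : ℕ) (φ : PowerSeries k)
    (h : (PowerSeries.C ζ) ^ m * rescale ζ φ = φ) : wt l (-(m : ZMod l)) φ := by
  intro n hn
  have := congrArg (PowerSeries.coeff n) h
  rw [← map_pow, PowerSeries.coeff_C_mul, coeff_rescale, ← mul_assoc, ← pow_add] at this
  by_contra h0
  apply hn
  have h1 : ζ ^ (m + n) = 1 := by
    have h2 : (ζ ^ (m + n) - 1) * PowerSeries.coeff n φ = 0 := by
      rw [sub_mul, one_mul, this, sub_self]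
    rcases mul_eq_zero.mp h2 with h3 | h3
    · exact sub_eq_zero.mp h3
    · exact absurd h3 h0
  have := (hζ.pow_eq_one_iff_dvd (m + n)).mp h1
  have : ((m + n : ℕ) : ZMod l) = 0 := (ZMod.natCast_eq_zero_iff _ _).mpr this
  rw [Nat.cast_add] at this
  linear_combination this

variable {A : Type*} [CommRing A] {d : ℕ}

lemma diff_mem (x y : Fin d → A) (p : MvPolynomial (Fin d) A) :
    aeval y p - aeval x p ∈ Ideal.span (Set.range fun j => y j - x j) := by
  induction p using MvPolynomial.induction_on with
  | C s => simp
  | add p q hp hq =>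
    rw [map_add, map_add, show aeval y p + aeval y q - (aeval x p + aeval x q)
      = (aeval y p - aeval x p) + (aeval y q - aeval x q) by ring]
    exact add_mem hp hq
  | mul_X p i hp =>
    rw [map_mul, map_mul, aeval_X, aeval_X, show aeval y p * y i - aeval x p * x i
      = (aeval y p - aeval x p) * y i + aeval x p * (y i - x i) by ring]
    exact add_mem (Ideal.mul_mem_right _ _ hp)
      (Ideal.mul_mem_left _ _ (Ideal.subset_span ⟨i, rfl⟩))

lemma taylor_mem (x y : Fin d → A) (p : MvPolynomial (Fin d) A) :
    aeval y p - aeval x p - ∑ j, (y j - x j) * aeval x (pderiv j p) ∈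
      (Ideal.span (Set.range fun j => y j - x j)) ^ 2 := by
  classical
  set I := Ideal.span (Set.range fun j => y j - x j) with hI
  have hδ : ∀ j, y j - x j ∈ I := fun j => Ideal.subset_span ⟨j, rfl⟩
  induction p using MvPolynomial.induction_on with
  | C s => simp
  | add p q hp hq =>
    have : aeval y (p + q) - aeval x (p + q) - ∑ j, (y j - x j) * aeval x (pderiv j (p + q))
        = (aeval y p - aeval x p - ∑ j, (y j - x j) * aeval x (pderiv j p))
          + (aeval y q - aeval x q - ∑ j, (y j - x j) * aeval x (pderiv j q)) := by
      simp only [map_add, mul_add, Finset.sum_add_distrib]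
      ring
    rw [this]; exact add_mem hp hq
  | mul_X p i hp =>
    have hs : ∀ j, aeval x (pderiv j (p * X i)) =
        aeval x (pderiv j p) * x i + (if j = i then aeval x p else 0) := by
      intro j
      rw [pderiv_mul, map_add, map_mul, aeval_X]
      by_cases h : j = i
      · subst h; simp
      · simp [pderiv_X_of_ne (Ne.symm h), h]
    have hsum : ∑ j, (y j - x j) * aeval x (pderiv j (p * X i))
        = (∑ j, (y j - x j) * aeval x (pderiv j p)) * x i + (y i - x i) * aeval x p := by
      calc ∑ j, (y j - x j) * aeval x (pderiv j (p * X i))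
          = ∑ j, ((y j - x j) * (aeval x (pderiv j p) * x i)
              + (y j - x j) * (if j = i then aeval x p else 0)) :=
            Finset.sum_congr rfl fun j _ => by rw [hs j]; ring
        _ = (∑ j, (y j - x j) * aeval x (pderiv j p)) * x i + (y i - x i) * aeval x p := by
            rw [Finset.sum_add_distrib]
            congr 1
            · rw [Finset.sum_mul]
              exact Finset.sum_congr rfl fun j _ => by ring
            · simp [mul_ite, Finset.sum_ite_eq']
    have key : aeval y (p * X i) - aeval x (p * X i)
        - ∑ j, (y j - x j) * aeval x (pderiv j (p * X i))
        = (∑ j, (y j - x j) * aeval x (pderiv j p)) * (y i - x i)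
          + (aeval y p - aeval x p - ∑ j, (y j - x j) * aeval x (pderiv j p)) * y i := by
      rw [hsum, map_mul, map_mul, aeval_X, aeval_X]
      ring
    rw [key]
    refine add_mem ?_ (Ideal.mul_mem_right _ _ hp)
    rw [sq]
    refine Ideal.mul_mem_mul ?_ (hδ i)
    exact Ideal.sum_mem _ fun j _ => Ideal.mul_mem_right _ _ (hδ j)

lemma dvd_of_mem_span {g z : A} {f : Fin d → A} (hg : ∀ j, g ∣ f j)
    (hz : z ∈ Ideal.span (Set.range f)) : g ∣ z := by
  rw [← Ideal.mem_span_singleton]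
  refine Ideal.span_le.mpr ?_ hz
  rintro _ ⟨j, rfl⟩
  exact Ideal.mem_span_singleton.mpr (hg j)

lemma dvd_of_mem_span_sq {g z : A} {f : Fin d → A} (hg : ∀ j, g ∣ f j)
    (hz : z ∈ (Ideal.span (Set.range f)) ^ 2) : g ^ 2 ∣ z := by
  rw [← Ideal.mem_span_singleton, ← Ideal.span_singleton_pow]
  refine Ideal.pow_right_mono (Ideal.span_le.mpr ?_) 2 hz
  rintro _ ⟨j, rfl⟩
  exact Ideal.mem_span_singleton.mpr (hg j)

variable {k : Type*} [Field k]

lemma limit_exists (s : ℕ → PowerSeries k)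
    (h : ∀ n, (X : PowerSeries k) ^ n ∣ (s (n + 1) - s n)) :
    ∃ L : PowerSeries k, ∀ n, (X : PowerSeries k) ^ n ∣ (L - s n) := by
  have stab : ∀ m j, m + 1 ≤ j → PowerSeries.coeff m (s j) = PowerSeries.coeff m (s (m + 1)) := by
    intro m j hj
    induction j, hj using Nat.le_induction with
    | base => rfl
    | succ j hj ih =>
      rw [← ih]
      have := (X_pow_dvd_iff.mp (h j)) m (by omega)
      rw [map_sub, sub_eq_zero] at this
      exact this
  refine ⟨PowerSeries.mk fun m => PowerSeries.coeff m (s (m + 1)), fun n => ?_⟩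
  rw [X_pow_dvd_iff]
  intro m hm
  rw [map_sub, PowerSeries.coeff_mk, stab m n (by omega), sub_self]

lemma unit_cancel {u w : PowerSeries k} (hu : IsUnit u) {v m : ℕ}
    (h : (X : PowerSeries k) ^ (v + m) ∣ (X : PowerSeries k) ^ v * u * w) :
    (X : PowerSeries k) ^ m ∣ w := by
  rw [pow_add, mul_assoc] at h
  have hX : (X : PowerSeries k) ^ v ≠ 0 := pow_ne_zero _ X_ne_zero
  have := (mul_dvd_mul_iff_left hX).mp h
  exact hu.dvd_mul_left.mp this



variable {k : Type*} [Field k] {d : ℕ} {a : Fin d → ℕ} {ζ : k}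

lemma muActionHom_C (s : PowerSeries k) :
    muActionHom k a ζ (C s) = MvPolynomial.C (rescale ζ s) := by
  simp [muActionHom]

lemma muActionHom_X (i : Fin d) :
    muActionHom k a ζ (X i) = MvPolynomial.C ((PowerSeries.C ζ) ^ a i) * X i := by
  simp [muActionHom]

lemma aeval_muActionHom (x : Fin d → PowerSeries k)
    (hx : ∀ i, rescale ζ (x i) = (PowerSeries.C ζ) ^ a i * x i)
    (p : MvPolynomial (Fin d) (PowerSeries k)) :
    aeval x (muActionHom k a ζ p) = rescale ζ (aeval x p) := by
  induction p using MvPolynomial.induction_on with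
  | C s => rw [muActionHom_C, aeval_C, aeval_C]; rfl
  | add p q hp hq => simp only [map_add, hp, hq]
  | mul_X p i hp =>
    rw [map_mul, map_mul, muActionHom_X, map_mul, aeval_C, aeval_X, map_mul, hp, aeval_X]
    rw [show (algebraMap (PowerSeries k) (PowerSeries k)) ((PowerSeries.C ζ) ^ a i)
      = (PowerSeries.C ζ) ^ a i from rfl, ← hx i]
    exact (map_mul (rescale ζ) _ _).symm

lemma pderiv_muActionHom (j : Fin d) (p : MvPolynomial (Fin d) (PowerSeries k)) :
    pderiv j (muActionHom k a ζ p) =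
      MvPolynomial.C ((PowerSeries.C ζ) ^ a j) * muActionHom k a ζ (pderiv j p) := by
  induction p using MvPolynomial.induction_on with
  | C s => rw [muActionHom_C, pderiv_C, pderiv_C, map_zero, mul_zero]
  | add p q hp hq => rw [map_add, map_add, map_add, hp, hq, map_add, mul_add]
  | mul_X p i hp =>
    classical
    by_cases hij : i = j
    · subst hij
      simp only [map_mul, muActionHom_X, pderiv_mul, pderiv_C, pderiv_C_mul, pderiv_X_self, mul_one,
        map_add, map_one, hp]
      ring
    · simp only [map_mul, muActionHom_X, pderiv_mul, pderiv_C, pderiv_C_mul,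
        pderiv_X_of_ne (fun h => hij h), mul_zero, add_zero, map_add, map_zero, hp]
      ring

lemma wt_congr {k : Type*} [Field k] {l : ℕ} {α α' : ZMod l} {φ : PowerSeries k}
    (h : α = α') (hw : wt l α φ) : wt l α' φ := h ▸ hw

lemma mulVec_apply {A : Type*} [CommRing A] {r : ℕ} (M : Matrix (Fin r) (Fin r) A)
    (v : Fin r → A) (j : Fin r) : Matrix.mulVec M v j = ∑ i, M j i * v i := rfl

lemma sum_fin_castLE {M : Type*} [AddCommMonoid M] {d r : ℕ} (hr : r ≤ d) (g : Fin d → M)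
    (hg : ∀ j : Fin d, r ≤ (j : ℕ) → g j = 0) :
    ∑ j, g j = ∑ jr : Fin r, g (Fin.castLE hr jr) := by
  classical
  have himg : Finset.univ.filter (fun j : Fin d => (j : ℕ) < r)
      = Finset.image (Fin.castLE hr) Finset.univ := by
    ext j
    simp only [Finset.mem_filter, Finset.mem_univ, true_and, Finset.mem_image]
    constructor
    · intro hj; exact ⟨⟨j, hj⟩, Fin.ext rfl⟩
    · rintro ⟨jr, rfl⟩; exact jr.2
  rw [← Finset.sum_subset (Finset.filter_subset
      (fun j : Fin d => (j : ℕ) < r) Finset.univ) (fun x _ hx => hg x (by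
        simp only [Finset.mem_filter, Finset.mem_univ, true_and] at hx; omega))]
  rw [himg, Finset.sum_image (fun x _ y _ h => Fin.castLE_injective hr h)]


end NHAux

/-- Equivariant Newton–Hensel lemma: let `k` be a field of characteristic zero
containing a primitive `l`-th root of unity `ζ`, let `μ_l` act on `k[[t]][x_1,...,x_d]` by
`ζ·t = ζt`, `ζ·x_i = ζ^{a_i} x_i` (`0 ≤ a_i ≤ l-1`) and on `k[[t]]` by `ζ·t = ζt`.
Let `f_1,...,f_r` (`r ≤ d`) be `μ_l`-invariant, `J = det(∂f_i/∂x_j)_{1≤i,j≤r}`, and `e > 0`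
with `e' := e + Σ_{j=1}^r a_j` divisible by `l`.  If a `μ_l`-equivariant `k[[t]]`-algebra
homomorphism `η` satisfies `η(J) ≢ 0 mod t^{e+1}` and `η(f_i) ≡ 0 mod t^{2e'+l}` for all
`i`, then there is a `μ_l`-equivariant `θ` with `θ(f_i) = 0` and
`θ(x_i) ≡ η(x_i) mod t^{e+l}` for all `i`. -/

theorem equivariant_newton_hensel
    (k : Type*) [Field k] [CharZero k]
    (l d r : ℕ) (hl : 0 < l) (hr : r ≤ d)
    (ζ : k) (hζ : IsPrimitiveRoot ζ l)
    (a : Fin d → ℕ) (ha : ∀ i, a i ≤ l - 1)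
    (f : Fin r → MvPolynomial (Fin d) (PowerSeries k))
    (hinv : ∀ i, muActionHom k a ζ (f i) = f i)
    (e : ℕ) (he : 0 < e)
    (hdvd : l ∣ (e + ∑ j : Fin r, a (Fin.castLE hr j)))
    (η : MvPolynomial (Fin d) (PowerSeries k) →ₐ[PowerSeries k] PowerSeries k)
    (hη : IsEquivariantHom a ζ η)
    (hJ : ¬ (PowerSeries.X : PowerSeries k) ^ (e + 1) ∣
        η (Matrix.det (Matrix.of fun i j : Fin r => pderiv (Fin.castLE hr j) (f i))))
    (hf : ∀ i : Fin r,
      (PowerSeries.X : PowerSeries k) ^ (2 * (e + ∑ j : Fin r, a (Fin.castLE hr j)) + l) ∣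
        η (f i)) :
    ∃ θ : MvPolynomial (Fin d) (PowerSeries k) →ₐ[PowerSeries k] PowerSeries k,
      IsEquivariantHom a ζ θ ∧ (∀ i, θ (f i) = 0) ∧
      ∀ i : Fin d,
        (PowerSeries.X : PowerSeries k) ^ (e + l) ∣ (θ (X i) - η (X i)) := by
  classical
  set s' : ℕ := ∑ j : Fin r, a (Fin.castLE hr j) with hs'
  set x₀ : Fin d → PowerSeries k := fun j => η (MvPolynomial.X j) with hx₀def
  have hηeq : ∀ p, η p = aeval x₀ p := by
    intro p
    conv_lhs => rw [MvPolynomial.aeval_unique η]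
    rfl
  have hx₀res : ∀ j, PowerSeries.rescale ζ (x₀ j) = (PowerSeries.C ζ) ^ a j * x₀ j := by
    intro j
    have h1 := hη (MvPolynomial.X j)
    rw [NHAux.muActionHom_X] at h1
    have h2 : η (MvPolynomial.C ((PowerSeries.C ζ) ^ a j) * MvPolynomial.X j)
        = (PowerSeries.C ζ) ^ a j * x₀ j := by
      rw [map_mul, ← MvPolynomial.algebraMap_eq, AlgHom.commutes] <;> rfl
    rw [h2] at h1
    exact h1.symm
  have hwx₀ : ∀ j, NHAux.wt l (a j : ZMod l) (x₀ j) :=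
    fun j => (NHAux.rescale_eq_iff_wt hl hζ (a j) _).mp (hx₀res j)
  set M : Matrix (Fin r) (Fin r) (PowerSeries k) :=
    Matrix.of fun i j => η (pderiv (Fin.castLE hr j) (f i)) with hM
  set c := M.det with hc_def
  have hJc : ¬ (PowerSeries.X : PowerSeries k) ^ (e + 1) ∣ c := by
    intro hdd
    apply hJ
    have hdet : η (Matrix.det (Matrix.of fun i j : Fin r => pderiv (Fin.castLE hr j) (f i)))
        = c := by
      rw [AlgHom.map_det]
      rfl
    rwa [hdet]
  have hc0 : c ≠ 0 := fun h => hJc (h ▸ dvd_zero _)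
  set v : ℕ := c.order.toNat with hv_def
  set U := PowerSeries.divXPowOrder c with hU_def
  have hU : IsUnit U := PowerSeries.isUnit_divided_by_X_pow_order hc0
  have hcU : (PowerSeries.X : PowerSeries k) ^ v * U = c :=
    PowerSeries.X_pow_order_mul_divXPowOrder
  have hXv : (PowerSeries.X : PowerSeries k) ^ v ∣ c := ⟨U, hcU.symm⟩
  have hve : v ≤ e := by
    by_contra hgt
    exact hJc ((pow_dvd_pow _ (by omega)).trans hXv)
  have hc_dvd : ∀ z : PowerSeries k, (PowerSeries.X : PowerSeries k) ^ v ∣ z → c ∣ z := by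
    rintro z ⟨y, hy⟩
    refine ⟨(↑hU.unit⁻¹ : PowerSeries k) * y, ?_⟩
    have hUu : (hU.unit : PowerSeries k) = U := hU.unit_spec
    have hone : U * (↑hU.unit⁻¹ : PowerSeries k) = 1 := by
      have h2 := Units.mul_inv hU.unit
      rwa [hUu] at h2
    rw [hy, ← hcU, mul_assoc, ← mul_assoc U, hone, one_mul]
  have hcancel : ∀ (m : ℕ) (z : PowerSeries k),
      (PowerSeries.X : PowerSeries k) ^ (v + m) ∣ c * z →
      (PowerSeries.X : PowerSeries k) ^ m ∣ z := by
    intro m z h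
    exact NHAux.unit_cancel hU (by rwa [hcU])
  set w : ℕ := 2 * (e + s') + l - v with hw_def
  have hvw : v + w = 2 * (e + s') + l := by omega
  have hwel : e + l ≤ w := by omega
  have hwv : v + 1 ≤ w := by omega
  have hse : (s' : ZMod l) = -(e : ZMod l) := by
    have h0 : ((e + s' : ℕ) : ZMod l) = 0 := (ZMod.natCast_eq_zero_iff _ _).mpr hdvd
    rw [Nat.cast_add] at h0
    linear_combination h0
  have hγsum : (∑ q : Fin r, -(a (Fin.castLE hr q) : ZMod l)) = (e : ZMod l) := by
    rw [Finset.sum_neg_distrib, ← Nat.cast_sum, ← hs', hse, neg_neg]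
  have hwM : ∀ (i jr : Fin r), NHAux.wt l (-(a (Fin.castLE hr jr) : ZMod l)) (M i jr) := by
    intro i jr
    apply NHAux.wt_of_C_pow_mul_rescale hζ
    have h1 := congrArg η (NHAux.pderiv_muActionHom (a := a) (ζ := ζ) (Fin.castLE hr jr) (f i))
    rw [hinv i, map_mul, ← MvPolynomial.algebraMap_eq, AlgHom.commutes, hη] at h1
    have hMij : M i jr = η (pderiv (Fin.castLE hr jr) (f i)) := by rw [hM]; rfl
    rw [hMij]
    exact h1.symm
  have hwc : NHAux.wt l (e : ZMod l) c := by
    have h1 := NHAux.wt_det (β := fun _ : Fin r => (0 : ZMod l))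
      (γ := fun q => -(a (Fin.castLE hr q) : ZMod l)) (N := M)
      (fun p q => NHAux.wt_congr (zero_add _).symm (hwM p q))
    refine NHAux.wt_congr ?_ h1
    rw [hγsum, Finset.sum_const_zero, zero_add]
  have hwadj : ∀ (jr i : Fin r),
      NHAux.wt l ((a (Fin.castLE hr jr) : ZMod l) + (e : ZMod l)) (Matrix.adjugate M jr i) := by
    intro jr i
    rw [Matrix.adjugate_apply]
    have h1 := NHAux.wt_det
      (β := fun p : Fin r => if p = i then (a (Fin.castLE hr jr) : ZMod l) else 0)
      (γ := fun q => -(a (Fin.castLE hr q) : ZMod l))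
      (N := Matrix.updateRow M i (Pi.single jr 1)) ?_
    · refine NHAux.wt_congr ?_ h1
      rw [hγsum, Finset.sum_ite_eq', if_pos (Finset.mem_univ i)]
    · intro p q
      rw [Matrix.updateRow_apply]
      by_cases hp : p = i
      · rw [if_pos hp, hp, if_pos rfl, Pi.single_apply]
        by_cases hq : q = jr
        · rw [if_pos hq, hq]
          exact NHAux.wt_congr (add_neg_cancel _).symm NHAux.wt_one
        · rw [if_neg hq]
          exact NHAux.wt_zero _
      · rw [if_neg hp, if_neg hp, zero_add]
        exact hwM p q
  set pad : (Fin r → PowerSeries k) → Fin d → PowerSeries k :=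
    fun uu j => if h : (j : ℕ) < r then uu ⟨j, h⟩ else 0 with hpad
  have pad_castLE : ∀ (uu : Fin r → PowerSeries k) (jr : Fin r),
      pad uu (Fin.castLE hr jr) = uu jr := by
    intro uu jr
    rw [hpad]
    dsimp only
    rw [dif_pos (show ((Fin.castLE hr jr : Fin d) : ℕ) < r from jr.2)]
    exact congrArg uu (Fin.ext rfl)
  have pad_ge : ∀ (uu : Fin r → PowerSeries k) (j : Fin d), r ≤ (j : ℕ) → pad uu j = 0 := by
    intro uu j hj
    rw [hpad]
    dsimp only
    rw [dif_neg (by omega)]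
  set xv : (Fin r → PowerSeries k) → Fin d → PowerSeries k :=
    fun uu j => x₀ j + pad (Matrix.mulVec (Matrix.adjugate M) uu) j with hxv
  set G : (Fin r → PowerSeries k) → Fin r → PowerSeries k :=
    fun uu i => aeval (xv uu) (f i) with hG
  have hpadw : ∀ (m : ℕ) (uu : Fin r → PowerSeries k),
      (∀ i, (PowerSeries.X : PowerSeries k) ^ m ∣ uu i) →
      ∀ j, (PowerSeries.X : PowerSeries k) ^ m ∣ pad (Matrix.mulVec (Matrix.adjugate M) uu) j := by
    intro m uu huu j
    by_cases hj : (j : ℕ) < r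
    · rw [hpad]
      dsimp only
      rw [dif_pos hj, NHAux.mulVec_apply]
      exact Finset.dvd_sum fun i _ => (huu i).mul_left _
    · rw [pad_ge _ _ (by omega)]
      exact dvd_zero _
  have hxv0 : xv (fun _ => 0) = x₀ := by
    funext j
    rw [hxv]
    dsimp only
    rw [show Matrix.mulVec (Matrix.adjugate M) (fun _ => (0 : PowerSeries k))
      = fun _ => (0 : PowerSeries k) from Matrix.mulVec_zero _]
    rw [hpad]
    dsimp only
    split_ifs <;> simp
  have hwxv : ∀ uu : Fin r → PowerSeries k, (∀ i, NHAux.wt l (-(e : ZMod l)) (uu i)) →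
      ∀ j, NHAux.wt l (a j : ZMod l) (xv uu j) := by
    intro uu hu j
    rw [hxv]
    dsimp only
    refine NHAux.wt_add (hwx₀ j) ?_
    by_cases hj : (j : ℕ) < r
    · rw [hpad]
      dsimp only
      rw [dif_pos hj, NHAux.mulVec_apply]
      have h1 := NHAux.wt_sum (s := Finset.univ)
        (fun i _ => NHAux.wt_mul (hwadj ⟨j, hj⟩ i) (hu i))
      refine NHAux.wt_congr ?_ h1
      have h2 : Fin.castLE hr ⟨j, hj⟩ = j := Fin.ext rfl
      rw [h2]
      ring
    · rw [pad_ge _ _ (by omega)]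
      exact NHAux.wt_zero _
  have hwG : ∀ uu : Fin r → PowerSeries k, (∀ i, NHAux.wt l (-(e : ZMod l)) (uu i)) →
      ∀ i, NHAux.wt l (0 : ZMod l) (G uu i) := by
    intro uu hu i
    have hres : ∀ j, PowerSeries.rescale ζ (xv uu j) = (PowerSeries.C ζ) ^ a j * xv uu j :=
      fun j => (NHAux.rescale_eq_iff_wt hl hζ (a j) _).mpr (hwxv uu hu j)
    have h1 := NHAux.aeval_muActionHom (xv uu) hres (f i)
    rw [hinv i] at h1
    have h2 : NHAux.wt l ((0 : ℕ) : ZMod l) (G uu i) := by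
      refine (NHAux.rescale_eq_iff_wt hl hζ 0 _).mp ?_
      rw [pow_zero, one_mul]
      exact h1.symm
    exact NHAux.wt_congr (by norm_num) h2
  obtain ⟨qd, hqd⟩ : ∃ qd : PowerSeries k → PowerSeries k, ∀ z, c ∣ z → c * qd z = z :=
    ⟨fun z => if h : c ∣ z then h.choose else 0, fun z h => by
      dsimp only
      rw [dif_pos h]
      exact h.choose_spec.symm⟩
  set step : (Fin r → PowerSeries k) → Fin r → PowerSeries k :=
    fun uu i => qd (c * uu i - G uu i) with hstepdef
  obtain ⟨u, hu0, huS⟩ : ∃ u : ℕ → Fin r → PowerSeries k,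
      u 0 = (fun _ => 0) ∧ ∀ n, u (n + 1) = step (u n) :=
    ⟨fun n => Nat.rec (fun _ => 0) (fun _ uu => step uu) n, rfl, fun n => rfl⟩
  have hstep : ∀ (n : ℕ) (uu : Fin r → PowerSeries k),
      (∀ i, (PowerSeries.X : PowerSeries k) ^ w ∣ uu i) →
      (∀ i, NHAux.wt l (-(e : ZMod l)) (uu i)) →
      (∀ i, (PowerSeries.X : PowerSeries k) ^ (w + v + n) ∣ G uu i) →
      (∀ i, (PowerSeries.X : PowerSeries k) ^ (w + n) ∣ (step uu i - uu i)) ∧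
      (∀ i, (PowerSeries.X : PowerSeries k) ^ w ∣ step uu i) ∧
      (∀ i, NHAux.wt l (-(e : ZMod l)) (step uu i)) ∧
      (∀ i, (PowerSeries.X : PowerSeries k) ^ (w + v + (n + 1)) ∣ G (step uu) i) := by
    intro n uu h1 h2 h3
    have hGc : ∀ i, c ∣ (c * uu i - G uu i) := fun i =>
      dvd_sub (dvd_mul_right c (uu i))
        (hc_dvd _ ((pow_dvd_pow _ (by omega)).trans (h3 i)))
    have hceq : ∀ i, c * step uu i = c * uu i - G uu i := fun i => hqd _ (hGc i)
    have hδe : ∀ i, c * (step uu i - uu i) = -(G uu i) := by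
      intro i
      rw [mul_sub, hceq]
      ring
    have hδdvd : ∀ i, (PowerSeries.X : PowerSeries k) ^ (w + n) ∣ (step uu i - uu i) := by
      intro i
      apply hcancel
      rw [hδe i, dvd_neg, show v + (w + n) = w + v + n from by ring]
      exact h3 i
    have hXw : ∀ i, (PowerSeries.X : PowerSeries k) ^ w ∣ step uu i := by
      intro i
      rw [show step uu i = uu i + (step uu i - uu i) from by ring]
      exact dvd_add (h1 i) ((pow_dvd_pow _ (by omega)).trans (hδdvd i))
    have hwstep : ∀ i, NHAux.wt l (-(e : ZMod l)) (step uu i) := by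
      intro i
      have h0 : NHAux.wt l (0 : ZMod l) (c * step uu i) := by
        rw [hceq i]
        exact NHAux.wt_sub (NHAux.wt_congr (add_neg_cancel _) (NHAux.wt_mul hwc (h2 i)))
          (hwG uu h2 i)
      exact NHAux.wt_congr (zero_sub _) (NHAux.wt_of_mul_cancel hc0 hwc h0)
    refine ⟨hδdvd, hXw, hwstep, ?_⟩
    intro i
    have hδvdvd : ∀ j, (PowerSeries.X : PowerSeries k) ^ (w + n) ∣
        (xv (step uu) j - xv uu j) := by
      intro j
      have hrw : xv (step uu) j - xv uu j
          = pad (Matrix.mulVec (Matrix.adjugate M) (fun i' => step uu i' - uu i')) j := by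
        rw [hxv]
        dsimp only
        by_cases hj : (j : ℕ) < r
        · rw [hpad]
          dsimp only
          rw [dif_pos hj, dif_pos hj, dif_pos hj, NHAux.mulVec_apply, NHAux.mulVec_apply,
            NHAux.mulVec_apply, add_sub_add_left_eq_sub, ← Finset.sum_sub_distrib]
          exact Finset.sum_congr rfl fun i' _ => (mul_sub _ _ _).symm
        · rw [pad_ge _ _ (by omega), pad_ge _ _ (by omega), pad_ge _ _ (by omega)]
          ring
      rw [hrw]
      exact hpadw (w + n) _ hδdvd j
    have htay := NHAux.taylor_mem (xv uu) (xv (step uu)) (f i)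
    have hRem : (PowerSeries.X : PowerSeries k) ^ (w + v + (n + 1)) ∣
        (aeval (xv (step uu)) (f i) - aeval (xv uu) (f i)
          - ∑ j, (xv (step uu) j - xv uu j) * aeval (xv uu) (pderiv j (f i))) := by
      have h2w := NHAux.dvd_of_mem_span_sq (g := (PowerSeries.X : PowerSeries k) ^ (w + n))
        (f := fun j => xv (step uu) j - xv uu j) (fun j => hδvdvd j) htay
      rw [← pow_mul] at h2w
      exact (pow_dvd_pow _ (by omega)).trans h2w
    have hlin : ∑ j, (xv (step uu) j - xv uu j) * aeval (xv uu) (pderiv j (f i))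
        = (∑ j, (xv (step uu) j - xv uu j) * aeval x₀ (pderiv j (f i)))
          + ∑ j, (xv (step uu) j - xv uu j)
            * (aeval (xv uu) (pderiv j (f i)) - aeval x₀ (pderiv j (f i))) := by
      rw [← Finset.sum_add_distrib]
      exact Finset.sum_congr rfl fun j _ => by ring
    have hD2 : (PowerSeries.X : PowerSeries k) ^ (w + v + (n + 1)) ∣
        ∑ j, (xv (step uu) j - xv uu j)
          * (aeval (xv uu) (pderiv j (f i)) - aeval x₀ (pderiv j (f i))) := by
      refine Finset.dvd_sum fun j _ => ?_
      have hx0diff : (PowerSeries.X : PowerSeries k) ^ w ∣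
          (aeval (xv uu) (pderiv j (f i)) - aeval x₀ (pderiv j (f i))) := by
        refine NHAux.dvd_of_mem_span (f := fun j' => xv uu j' - x₀ j') ?_
          (NHAux.diff_mem x₀ (xv uu) _)
        intro j'
        rw [hxv]
        dsimp only
        rw [add_sub_cancel_left]
        exact hpadw w uu h1 j'
      have hm := mul_dvd_mul (hδvdvd j) hx0diff
      rw [← pow_add] at hm
      exact (pow_dvd_pow _ (by omega)).trans hm
    have hD1 : ∑ j, (xv (step uu) j - xv uu j) * aeval x₀ (pderiv j (f i)) = -(G uu i) := by
      have hzero : ∀ j : Fin d, r ≤ (j : ℕ) →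
          (xv (step uu) j - xv uu j) * aeval x₀ (pderiv j (f i)) = 0 := by
        intro j hj
        rw [hxv]
        dsimp only
        rw [pad_ge _ _ hj, pad_ge _ _ hj]
        ring
      rw [NHAux.sum_fin_castLE hr _ hzero]
      have hcoord : ∀ jr : Fin r,
          xv (step uu) (Fin.castLE hr jr) - xv uu (Fin.castLE hr jr)
          = Matrix.mulVec (Matrix.adjugate M) (fun i' => step uu i' - uu i') jr := by
        intro jr
        rw [hxv]
        dsimp only
        rw [pad_castLE, pad_castLE, NHAux.mulVec_apply, NHAux.mulVec_apply,
          NHAux.mulVec_apply, add_sub_add_left_eq_sub, ← Finset.sum_sub_distrib]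
        exact Finset.sum_congr rfl fun i' _ => (mul_sub _ _ _).symm
      have haM : ∀ jr : Fin r, aeval x₀ (pderiv (Fin.castLE hr jr) (f i)) = M i jr := by
        intro jr
        rw [hM, ← hηeq]
        rfl
      calc ∑ jr : Fin r, (xv (step uu) (Fin.castLE hr jr) - xv uu (Fin.castLE hr jr))
            * aeval x₀ (pderiv (Fin.castLE hr jr) (f i))
          = ∑ jr : Fin r, M i jr
            * Matrix.mulVec (Matrix.adjugate M) (fun i' => step uu i' - uu i') jr := by
            refine Finset.sum_congr rfl fun jr _ => ?_
            rw [hcoord jr, haM jr]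
            ring
        _ = Matrix.mulVec M
            (Matrix.mulVec (Matrix.adjugate M) (fun i' => step uu i' - uu i')) i := by
            rw [NHAux.mulVec_apply]
        _ = c * (step uu i - uu i) := by
            rw [Matrix.mulVec_mulVec, Matrix.mul_adjugate, ← hc_def,
              Matrix.smul_mulVec, Matrix.one_mulVec]
            simp
        _ = -(G uu i) := hδe i
    have hfinal : G (step uu) i
        = (aeval (xv (step uu)) (f i) - aeval (xv uu) (f i)
            - ∑ j, (xv (step uu) j - xv uu j) * aeval (xv uu) (pderiv j (f i)))
          + (∑ j, (xv (step uu) j - xv uu j)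
              * (aeval (xv uu) (pderiv j (f i)) - aeval x₀ (pderiv j (f i))))
          + ((∑ j, (xv (step uu) j - xv uu j) * aeval x₀ (pderiv j (f i))) + G uu i) := by
      rw [hlin, hG]
      dsimp only
      ring
    rw [hfinal, hD1, neg_add_cancel, add_zero]
    exact dvd_add hRem hD2
  have hmain : ∀ n, (∀ i, (PowerSeries.X : PowerSeries k) ^ w ∣ u n i)
      ∧ (∀ i, NHAux.wt l (-(e : ZMod l)) (u n i))
      ∧ (∀ i, (PowerSeries.X : PowerSeries k) ^ (w + v + n) ∣ G (u n) i) := by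
    intro n
    induction n with
    | zero =>
      refine ⟨fun i => by rw [hu0]; exact dvd_zero _,
        fun i => by rw [hu0]; exact NHAux.wt_zero _, fun i => ?_⟩
      rw [hu0]
      have hG0 : G (fun _ => 0) i = η (f i) := by
        rw [hG]
        dsimp only
        rw [hxv0, ← hηeq]
      rw [hG0, show w + v + 0 = 2 * (e + s') + l from by omega]
      exact hf i
    | succ n ih =>
      obtain ⟨-, h1', h2', h3'⟩ := hstep n (u n) ih.1 ih.2.1 ih.2.2
      exact ⟨by rw [huS]; exact h1', by rw [huS]; exact h2', by rw [huS]; exact h3'⟩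
  have hdelta : ∀ n i, (PowerSeries.X : PowerSeries k) ^ n ∣ (u (n + 1) i - u n i) := by
    intro n i
    obtain ⟨h1', -, -, -⟩ := hstep n (u n) (hmain n).1 (hmain n).2.1 (hmain n).2.2
    rw [huS n]
    exact (pow_dvd_pow _ (by omega)).trans (h1' i)
  have hlim : ∀ i, ∃ Li : PowerSeries k, ∀ n,
      (PowerSeries.X : PowerSeries k) ^ n ∣ (Li - u n i) :=
    fun i => NHAux.limit_exists (fun n => u n i) (fun n => hdelta n i)
  choose L hL using hlim
  have hLw : ∀ i, (PowerSeries.X : PowerSeries k) ^ w ∣ L i := by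
    intro i
    rw [show L i = (L i - u w i) + u w i from by ring]
    exact dvd_add (hL i w) ((hmain w).1 i)
  have hLwt : ∀ i, NHAux.wt l (-(e : ZMod l)) (L i) := by
    intro i n hn
    have h1 := PowerSeries.X_pow_dvd_iff.mp (hL i (n + 1)) n (by omega)
    rw [map_sub, sub_eq_zero] at h1
    rw [h1]
    exact (hmain (n + 1)).2.1 i n hn
  refine ⟨aeval (xv L), ?_, ?_, ?_⟩
  · intro p
    exact NHAux.aeval_muActionHom (xv L)
      (fun j => (NHAux.rescale_eq_iff_wt hl hζ (a j) _).mpr (hwxv L hLwt j)) p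
  · intro i
    have hzero : ∀ n : ℕ, (PowerSeries.X : PowerSeries k) ^ n ∣ aeval (xv L) (f i) := by
      intro n
      have hdiff : (PowerSeries.X : PowerSeries k) ^ n ∣
          (aeval (xv L) (f i) - G (u n) i) := by
        refine NHAux.dvd_of_mem_span (f := fun j => xv L j - xv (u n) j) ?_
          (NHAux.diff_mem (xv (u n)) (xv L) (f i))
        intro j
        have hrw : xv L j - xv (u n) j
            = pad (Matrix.mulVec (Matrix.adjugate M) (fun i' => L i' - u n i')) j := by
          rw [hxv]
          dsimp only
          by_cases hj : (j : ℕ) < r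
          · rw [hpad]
            dsimp only
            rw [dif_pos hj, dif_pos hj, dif_pos hj, NHAux.mulVec_apply, NHAux.mulVec_apply,
              NHAux.mulVec_apply, add_sub_add_left_eq_sub, ← Finset.sum_sub_distrib]
            exact Finset.sum_congr rfl fun i' _ => (mul_sub _ _ _).symm
          · rw [pad_ge _ _ (by omega), pad_ge _ _ (by omega), pad_ge _ _ (by omega)]
            ring
        rw [hrw]
        exact hpadw n _ (fun i' => hL i' n) j
      have hGn : (PowerSeries.X : PowerSeries k) ^ n ∣ G (u n) i :=
        (pow_dvd_pow _ (by omega)).trans ((hmain n).2.2 i)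
      rw [show aeval (xv L) (f i) = (aeval (xv L) (f i) - G (u n) i) + G (u n) i from by ring]
      exact dvd_add hdiff hGn
    ext m
    rw [map_zero]
    exact PowerSeries.X_pow_dvd_iff.mp (hzero (m + 1)) m (by omega)
  · intro i
    rw [MvPolynomial.aeval_X]
    have hxi : η (MvPolynomial.X i) = x₀ i := rfl
    rw [hxi, hxv]
    dsimp only
    rw [show x₀ i + pad (Matrix.mulVec (Matrix.adjugate M) L) i - x₀ i
      = pad (Matrix.mulVec (Matrix.adjugate M) L) i from by ring]
    exact (pow_dvd_pow _ hwel).trans (hpadw w L hLw i)
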